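/- In a regular AG-groupoid, every fuzzy two-sided ideal μ satisfies: for all a there exist b, c with a = b*c and min(μ(b), μ(c)) ≥ μ(a) (i.e., μ is idempotent under the sup-min product: μ∘μ = μ). -/
import Mathlib

/-- In a regular AG-groupoid, every fuzzy two-sided ideal μ satisfies:
    each a factors as a = b*c with min(μ b, μ c) ≥ μ a. -/
theorem fuzzy_two_sided_idempotent {S : Type*} (mul : S → S → S)
    (hinv : ∀ a b c : S, mul (mul a b) c = mul (mul c b) a)
    (hreg : ∀ a : S, ∃ x : S, a = mul (mul a x) a)
    (μ : S → ℝ) (hμ0 : ∀ x, 0 ≤ μ x) (hμ1 : ∀ x, μ x ≤ 1)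
    (hideal : ∀ x y : S, max (μ x) (μ y) ≤ μ (mul x y)) :
    ∀ a : S, ∃ b c : S, a = mul b c ∧ μ a ≤ min (μ b) (μ c) := by
  intro a
  obtain ⟨x, hx⟩ := hreg a
  refine ⟨mul a x, a, hx, le_min ?_ le_rfl⟩
  exact le_trans (le_max_left _ _) (hideal a x)
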